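/- Assume 0 < η ≤ c_∞ and let (f^t, g^t, y^t, λ^t) be the iterates of PAME with θ ∈ (0,1) and τ := η/(2c_∞²). Then for every t ≥ 0 and every λ ∈ Δ^N, ⟨λ − λ^t, ∇_λ F(f^{t+1}, g^t, λ^t)⟩ ≤ c_∞‖c^t − b‖_1 + 7c_∞²‖λ^{t+1} − y^{t+1}‖_2/η + 5(1 − θ)c_∞²‖λ^t − λ^{t−1}‖_2/η. -/

import Mathlib

open scoped BigOperators

noncomputable section

namespace EOT

/-- Square matrices as functions. -/
abbrev Mat (n : ℕ) := Fin n → Fin n → ℝ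

/-- Frobenius inner product ⟨A, B⟩ = Σ_{i,j} A_{ij} B_{ij}. -/
def frob {n : ℕ} (A B : Mat n) : ℝ := ∑ i, ∑ j, A i j * B i j

/-- Row-sum vector r(A) = A 𝟙. -/
def rowSum {n : ℕ} (A : Mat n) : Fin n → ℝ := fun i => ∑ j, A i j

/-- Column-sum vector c(A) = Aᵀ 𝟙. -/
def colSum {n : ℕ} (A : Mat n) : Fin n → ℝ := fun j => ∑ i, A i j

/-- Entrywise ℓ₁ norm of a matrix. -/
def mnorm1 {n : ℕ} (A : Mat n) : ℝ := ∑ i, ∑ j, |A i j|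

/-- ℓ₁ norm of a vector. -/
def vnorm1 {m : ℕ} (v : Fin m → ℝ) : ℝ := ∑ i, |v i|

/-- Euclidean (ℓ₂) norm of a vector. -/
def vnorm2 {m : ℕ} (v : Fin m → ℝ) : ℝ := Real.sqrt (∑ i, v i ^ 2)

/-- c_∞ := max_{k,i,j} |C^k_{ij}|. -/
def cinf {n N : ℕ} (C : Fin N → Mat n) : ℝ := ⨆ k, ⨆ i, ⨆ j, |C k i j|

/-- ι := min_j log b_j. -/
def iotaMin {n : ℕ} (b : Fin n → ℝ) : ℝ := ⨅ j, Real.log (b j)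

/-- ζ^k(f,g,λ)_{ij} = exp((f_i + g_j − λ_k C^k_{ij})/η). -/
def zeta {n N : ℕ} (η : ℝ) (C : Fin N → Mat n) (f g : Fin n → ℝ)
    (lam : Fin N → ℝ) (k : Fin N) : Mat n :=
  fun i j => Real.exp ((f i + g j - lam k * C k i j) / η)

/-- π^k(f,g,λ) = ζ^k(f,g,λ) / Σ_{k'} ‖ζ^{k'}(f,g,λ)‖₁. -/
def piMat {n N : ℕ} (η : ℝ) (C : Fin N → Mat n) (f g : Fin n → ℝ)
    (lam : Fin N → ℝ) (k : Fin N) : Mat n :=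
  fun i j => zeta η C f g lam k i j / ∑ k', mnorm1 (zeta η C f g lam k')

/-- The dual objective F(f,g,λ) = ⟨f,a⟩ + ⟨g,b⟩ − η log(Σ_k ‖ζ^k‖₁) − η. -/
def Fdual {n N : ℕ} (η : ℝ) (C : Fin N → Mat n) (a b : Fin n → ℝ)
    (f g : Fin n → ℝ) (lam : Fin N → ℝ) : ℝ :=
  (∑ i, f i * a i) + (∑ j, g j * b j)
    - η * Real.log (∑ k, mnorm1 (zeta η C f g lam k)) - η

/-- Gradient of F with respect to λ: (∇_λ F)_k = ⟨π^k(f,g,λ), C^k⟩. -/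
def gradLam {n N : ℕ} (η : ℝ) (C : Fin N → Mat n) (f g : Fin n → ℝ)
    (lam : Fin N → ℝ) : Fin N → ℝ :=
  fun k => frob (piMat η C f g lam k) (C k)

/-- `p` is the Euclidean projection of `x` onto the probability simplex. -/
def IsProjSimplex {m : ℕ} (p x : Fin m → ℝ) : Prop :=
  p ∈ stdSimplex ℝ (Fin m) ∧
    ∀ q ∈ stdSimplex ℝ (Fin m),
      vnorm2 (fun k => p k - x k) ≤ vnorm2 (fun k => q k - x k)

/-- Kullback–Leibler divergence KL(v‖w) = Σ_j v_j log(v_j / w_j). -/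
def klVec {m : ℕ} (v w : Fin m → ℝ) : ℝ := ∑ j, v j * Real.log (v j / w j)

/-- The Hamiltonian E(f,g,λ¹,λ²) = F(f,g,λ¹) − (1/(2τ))‖λ¹ − λ²‖₂². -/
def ham {n N : ℕ} (η : ℝ) (C : Fin N → Mat n) (a b : Fin n → ℝ) (τ : ℝ)
    (f g : Fin n → ℝ) (l1 l2 : Fin N → ℝ) : ℝ :=
  Fdual η C a b f g l1 - 1 / (2 * τ) * vnorm2 (fun k => l1 k - l2 k) ^ 2

/-- The rounding procedure Round(A, a, b). -/
def roundMat {n : ℕ} (A : Mat n) (a b : Fin n → ℝ) : Mat n :=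
  let x : Fin n → ℝ := fun i => min (a i / rowSum A i) 1
  let A' : Mat n := fun i j => x i * A i j
  let y : Fin n → ℝ := fun j => min (b j / colSum A' j) 1
  let A'' : Mat n := fun i j => A' i j * y j
  let erra : Fin n → ℝ := fun i => a i - rowSum A'' i
  let errb : Fin n → ℝ := fun j => b j - colSum A'' j
  fun i j => A'' i j + if vnorm1 erra = 0 then 0 else erra i * errb j / vnorm1 erra

/-- The coupling decomposition set Π_{a,b}^N. -/
def coupling {n N : ℕ} (a b : Fin n → ℝ) : Set (Fin N → Mat n) :=
  {P | (∀ k i j, 0 ≤ P k i j) ∧ rowSum (∑ k, P k) = a ∧ colSum (∑ k, P k) = b}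

/-- ℓ(π, λ) = Σ_k λ_k ⟨π^k, C^k⟩. -/
def ell {n N : ℕ} (C : Fin N → Mat n) (P : Fin N → Mat n) (lam : Fin N → ℝ) : ℝ :=
  ∑ k, lam k * frob (P k) (C k)

/-- (P, λ) is an ε-optimal solution of the EOT problem (duality-gap ≤ ε). -/
def epsOptimal {n N : ℕ} (C : Fin N → Mat n) (a b : Fin n → ℝ)
    (P : Fin N → Mat n) (lam : Fin N → ℝ) (ε : ℝ) : Prop :=
  P ∈ coupling (N := N) a b ∧ lam ∈ stdSimplex ℝ (Fin N) ∧
    ∀ μ ∈ stdSimplex ℝ (Fin N), ∀ Q ∈ coupling (N := N) a b,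
      ell C P μ - ell C Q lam ≤ ε

/-- The defining properties of the Margins procedure output (a^k, b^k). -/
def MarginsProp {n N : ℕ} (P : Fin N → Mat n) (b : Fin n → ℝ)
    (ak bk : Fin N → Fin n → ℝ) : Prop :=
  (∀ k, ak k = rowSum (P k)) ∧
  (∀ k j, 0 ≤ bk k j) ∧
  (∀ j, ∑ k, bk k j = b j) ∧
  (∀ k, ∑ j, bk k j = ∑ i, ak k i) ∧
  (∀ j k k', 0 ≤ (bk k j - colSum (P k) j) * (bk k' j - colSum (P k') j))

section AuxPAME

lemma vnorm2_nonneg {m : ℕ} (v : Fin m → ℝ) : 0 ≤ vnorm2 v := Real.sqrt_nonneg _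

lemma sq_vnorm2 {m : ℕ} (v : Fin m → ℝ) : vnorm2 v ^ 2 = ∑ i, v i ^ 2 :=
  Real.sq_sqrt (by positivity)

lemma abs_le_vnorm2 {m : ℕ} (v : Fin m → ℝ) (i : Fin m) : |v i| ≤ vnorm2 v := by
  rw [vnorm2, ← Real.sqrt_sq_eq_abs]
  exact Real.sqrt_le_sqrt (Finset.single_le_sum (f := fun i => v i ^ 2)
    (fun i _ => sq_nonneg _) (Finset.mem_univ i))

lemma dot_le_cs {m : ℕ} (u v : Fin m → ℝ) : (∑ i, u i * v i) ≤ vnorm2 u * vnorm2 v :=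
  Real.sum_mul_le_sqrt_mul_sqrt _ _ _

lemma vnorm2_smul {m : ℕ} {c : ℝ} (hc : 0 ≤ c) (v : Fin m → ℝ) :
    vnorm2 (fun i => c * v i) = c * vnorm2 v := by
  rw [vnorm2, vnorm2]
  have : (∑ i, (c * v i) ^ 2) = c ^ 2 * ∑ i, v i ^ 2 := by
    rw [Finset.mul_sum]; exact Finset.sum_congr rfl fun i _ => by ring
  rw [this, Real.sqrt_mul (sq_nonneg c), Real.sqrt_sq hc]

lemma vnorm2_sub_comm {m : ℕ} (u v : Fin m → ℝ) :
    vnorm2 (fun k => u k - v k) = vnorm2 (fun k => v k - u k) := by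
  rw [vnorm2, vnorm2]
  congr 1
  exact Finset.sum_congr rfl fun i _ => by ring

lemma dot_le_bound {m : ℕ} (u v : Fin m → ℝ) (M : ℝ) (hM : ∀ k, |u k| ≤ M) :
    (∑ k, u k * v k) ≤ M * ∑ k, |v k| := by
  calc (∑ k, u k * v k) ≤ ∑ k, |u k * v k| :=
        Finset.sum_le_sum fun k _ => le_abs_self _
    _ = ∑ k, |u k| * |v k| := Finset.sum_congr rfl fun k _ => abs_mul _ _
    _ ≤ ∑ k, M * |v k| := Finset.sum_le_sum fun k _ =>
        mul_le_mul_of_nonneg_right (hM k) (abs_nonneg _)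
    _ = M * ∑ k, |v k| := (Finset.mul_sum _ _ _).symm

lemma simplex_nonneg {m : ℕ} {p : Fin m → ℝ} (hp : p ∈ stdSimplex ℝ (Fin m)) (i : Fin m) :
    0 ≤ p i := hp.1 i

lemma simplex_sum {m : ℕ} {p : Fin m → ℝ} (hp : p ∈ stdSimplex ℝ (Fin m)) :
    ∑ i, p i = 1 := hp.2

lemma simplex_le_one {m : ℕ} {p : Fin m → ℝ} (hp : p ∈ stdSimplex ℝ (Fin m)) (i : Fin m) :
    p i ≤ 1 := by
  have := Finset.single_le_sum (f := p) (fun j _ => hp.1 j) (Finset.mem_univ i)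
  simpa [hp.2] using this

lemma simplex_abs_sub_le_one {m : ℕ} {p q : Fin m → ℝ}
    (hp : p ∈ stdSimplex ℝ (Fin m)) (hq : q ∈ stdSimplex ℝ (Fin m)) (k : Fin m) :
    |p k - q k| ≤ 1 := by
  rw [abs_sub_le_iff]
  constructor <;> [have := simplex_le_one hp k; have := simplex_le_one hq k] <;>
    [have := hq.1 k; have := hp.1 k] <;> linarith [simplex_le_one hp k, simplex_le_one hq k, hq.1 k, hp.1 k]

lemma simplex_vnorm2_sub_le_two {m : ℕ} {p q : Fin m → ℝ}
    (hp : p ∈ stdSimplex ℝ (Fin m)) (hq : q ∈ stdSimplex ℝ (Fin m)) :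
    vnorm2 (fun k => p k - q k) ≤ 2 := by
  have h1 : (∑ k, (p k - q k) ^ 2) ≤ 4 := by
    have : ∀ k : Fin m, (p k - q k) ^ 2 ≤ |p k - q k| := by
      intro k
      have h := simplex_abs_sub_le_one hp hq k
      calc (p k - q k) ^ 2 = |p k - q k| * |p k - q k| := by
            rw [← sq_abs]; ring
        _ ≤ 1 * |p k - q k| := mul_le_mul_of_nonneg_right h (abs_nonneg _)
        _ = |p k - q k| := one_mul _
    have h2 : (∑ k, (p k - q k) ^ 2) ≤ ∑ k, |p k - q k| := Finset.sum_le_sum fun k _ => this k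
    have h3 : (∑ k, |p k - q k|) ≤ ∑ k, (p k + q k) := by
      refine Finset.sum_le_sum fun k _ => ?_
      rw [abs_sub_le_iff] at *
      constructor <;> linarith [hp.1 k, hq.1 k]
    have h4 : (∑ k, (p k + q k)) = 2 := by
      rw [Finset.sum_add_distrib, hp.2, hq.2]; norm_num
    linarith
  calc vnorm2 (fun k => p k - q k) ≤ Real.sqrt 4 := Real.sqrt_le_sqrt h1
    _ = 2 := by rw [show (4:ℝ) = 2 ^ 2 by norm_num, Real.sqrt_sq]; norm_num

lemma sum_expand {m : ℕ} (u v : Fin m → ℝ) (s : ℝ) :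
    (∑ k, (u k + s * v k) ^ 2)
      = (∑ k, u k ^ 2) + s * (2 * (∑ k, (v k * u k)) + s * (∑ k, v k ^ 2)) := by
  simp only [Finset.mul_sum, ← Finset.sum_add_distrib]
  exact Finset.sum_congr rfl fun k _ => by ring

lemma proj_vi {m : ℕ} {p x : Fin m → ℝ} (h : IsProjSimplex p x) {q : Fin m → ℝ}
    (hq : q ∈ stdSimplex ℝ (Fin m)) :
    (∑ k, (q k - p k) * (x k - p k)) ≤ 0 := by
  set D := ∑ k, (q k - p k) * (p k - x k) with hD
  set S := ∑ k, (q k - p k) ^ 2 with hS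
  have key : ∀ s : ℝ, 0 < s → s ≤ 1 → 0 ≤ 2 * D + s * S := by
    intro s hs hs1
    have hmem : (fun k => p k + s * (q k - p k)) ∈ stdSimplex ℝ (Fin m) := by
      have h2 := (convex_stdSimplex ℝ (Fin m)) h.1 hq
        (show (0:ℝ) ≤ 1 - s by linarith) (show (0:ℝ) ≤ s from hs.le)
        (show (1 - s) + s = 1 by ring)
      convert h2 using 1
      funext k
      simp only [Pi.add_apply, Pi.smul_apply, smul_eq_mul]
      ring
    have hmin := h.2 _ hmem
    have h1 : vnorm2 (fun k => p k - x k) ^ 2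
        ≤ vnorm2 (fun k => p k + s * (q k - p k) - x k) ^ 2 :=
      pow_le_pow_left₀ (vnorm2_nonneg _) hmin 2
    rw [sq_vnorm2, sq_vnorm2] at h1
    have he : (∑ i, (p i + s * (q i - p i) - x i) ^ 2)
        = (∑ k, ((p k - x k) + s * (q k - p k)) ^ 2) :=
      Finset.sum_congr rfl fun k _ => by ring
    rw [he, sum_expand] at h1
    have hterm : (∑ k, (q k - p k) * (p k - x k)) = D := by rw [hD]
    rw [hterm] at h1
    have h0 : s * 0 ≤ s * (2 * D + s * S) := by rw [hS]; nlinarith [h1]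
    exact le_of_mul_le_mul_left h0 hs
  have hDnn : 0 ≤ D := by
    by_contra hneg
    push_neg at hneg
    have hSnn : 0 ≤ S := Finset.sum_nonneg fun k _ => sq_nonneg _
    rcases eq_or_lt_of_le hSnn with hS0 | hSpos
    · have := key 1 one_pos le_rfl
      rw [← hS0] at this
      linarith
    · rcases le_total (-D / S) 1 with hle | hge
      · have hspos : 0 < -D / S := div_pos (by linarith) hSpos
        have := key (-D / S) hspos hle
        rw [div_mul_cancel₀ _ (ne_of_gt hSpos)] at this
        linarith
      · have := key 1 one_pos le_rfl
        have hSleD : S ≤ -D := (one_le_div hSpos).mp hge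
        linarith
  have heq : (∑ k, (q k - p k) * (x k - p k)) = -D := by
    rw [hD, ← Finset.sum_neg_distrib]
    exact Finset.sum_congr rfl fun k _ => by ring
  rw [heq]; linarith

lemma proj_contract {m : ℕ} {p x q : Fin m → ℝ} (h : IsProjSimplex p x)
    (hq : q ∈ stdSimplex ℝ (Fin m)) :
    vnorm2 (fun k => p k - q k) ≤ vnorm2 (fun k => x k - q k) := by
  set A := vnorm2 (fun k => p k - q k) with hA
  set B := vnorm2 (fun k => x k - q k) with hB
  have hAnn : 0 ≤ A := vnorm2_nonneg _
  have hBnn : 0 ≤ B := vnorm2_nonneg _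
  have hsplit : A ^ 2 = (∑ k, (q k - p k) * (x k - p k))
      + ∑ k, (p k - q k) * (x k - q k) := by
    rw [hA, sq_vnorm2, ← Finset.sum_add_distrib]
    exact Finset.sum_congr rfl fun k _ => by ring
  have h1 := proj_vi h hq
  have h2 : (∑ k, (p k - q k) * (x k - q k)) ≤ A * B := dot_le_cs _ _
  have hAB : A ^ 2 ≤ A * B := by rw [hsplit]; linarith
  rcases eq_or_lt_of_le hAnn with h0 | hpos
  · rw [← h0] at hAB ⊢; exact hBnn
  · have : A * A ≤ A * B := by rw [← sq]; exact hAB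
    exact (mul_le_mul_iff_right₀ hpos).mp this

variable {n N : ℕ}

lemma abs_le_cinf (C : Fin N → Mat n) (k : Fin N) (i j : Fin n) : |C k i j| ≤ cinf C := by
  have h3 : |C k i j| ≤ ⨆ j, |C k i j| :=
    le_ciSup (f := fun j => |C k i j|) (Set.Finite.bddAbove (Set.finite_range _)) j
  have h2 : (⨆ j, |C k i j|) ≤ ⨆ i, ⨆ j, |C k i j| :=
    le_ciSup (f := fun i => ⨆ j, |C k i j|) (Set.Finite.bddAbove (Set.finite_range _)) i
  have h1 : (⨆ i, ⨆ j, |C k i j|) ≤ ⨆ k, ⨆ i, ⨆ j, |C k i j| :=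
    le_ciSup (f := fun k => ⨆ i, ⨆ j, |C k i j|) (Set.Finite.bddAbove (Set.finite_range _)) k
  exact h3.trans (h2.trans h1)

lemma zeta_pos (η : ℝ) (C : Fin N → Mat n) (f g : Fin n → ℝ) (lam : Fin N → ℝ)
    (k : Fin N) (i j : Fin n) : 0 < zeta η C f g lam k i j := Real.exp_pos _

lemma mnorm1_zeta (η : ℝ) (C : Fin N → Mat n) (f g : Fin n → ℝ) (lam : Fin N → ℝ)
    (k : Fin N) : mnorm1 (zeta η C f g lam k) = ∑ i, ∑ j, zeta η C f g lam k i j := by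
  unfold mnorm1
  exact Finset.sum_congr rfl fun i _ => Finset.sum_congr rfl fun j _ =>
    abs_of_pos (zeta_pos _ _ _ _ _ _ _ _)

lemma Zsum_pos (hn : 0 < n) (hN : 0 < N) (η : ℝ) (C : Fin N → Mat n)
    (f g : Fin n → ℝ) (lam : Fin N → ℝ) :
    0 < ∑ k, mnorm1 (zeta η C f g lam k) := by
  have : Nonempty (Fin N) := Fin.pos_iff_nonempty.mp hN
  have : Nonempty (Fin n) := Fin.pos_iff_nonempty.mp hn
  refine Finset.sum_pos (fun k _ => ?_) Finset.univ_nonempty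
  rw [mnorm1_zeta]
  refine Finset.sum_pos (fun i _ => ?_) Finset.univ_nonempty
  exact Finset.sum_pos (fun j _ => zeta_pos _ _ _ _ _ _ _ _) Finset.univ_nonempty

lemma piMat_nonneg (hn : 0 < n) (hN : 0 < N) (η : ℝ) (C : Fin N → Mat n)
    (f g : Fin n → ℝ) (lam : Fin N → ℝ) (k : Fin N) (i j : Fin n) :
    0 ≤ piMat η C f g lam k i j :=
  div_nonneg (zeta_pos _ _ _ _ _ _ _ _).le (Zsum_pos hn hN η C f g lam).le

lemma pi_total (hn : 0 < n) (hN : 0 < N) (η : ℝ) (C : Fin N → Mat n)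
    (f g : Fin n → ℝ) (lam : Fin N → ℝ) :
    (∑ k, ∑ i, ∑ j, piMat η C f g lam k i j) = 1 := by
  have hZ := Zsum_pos hn hN η C f g lam
  unfold piMat
  calc (∑ k, ∑ i, ∑ j, zeta η C f g lam k i j / ∑ k', mnorm1 (zeta η C f g lam k'))
      = (∑ k, ∑ i, ∑ j, zeta η C f g lam k i j) / ∑ k', mnorm1 (zeta η C f g lam k') := by
        simp only [← Finset.sum_div]
    _ = 1 := by
        rw [div_eq_one_iff_eq hZ.ne']
        exact (Finset.sum_congr rfl fun k _ => (mnorm1_zeta η C f g lam k)).symm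

lemma grad_abs_sum_le (hn : 0 < n) (hN : 0 < N) (η : ℝ) (C : Fin N → Mat n)
    (f g : Fin n → ℝ) (lam : Fin N → ℝ) :
    (∑ k, |gradLam η C f g lam k|) ≤ cinf C := by
  have hc0 : 0 ≤ cinf C := (abs_nonneg _).trans
    (abs_le_cinf C ⟨0, hN⟩ ⟨0, hn⟩ ⟨0, hn⟩)
  calc (∑ k, |gradLam η C f g lam k|)
      ≤ ∑ k, ∑ i, ∑ j, piMat η C f g lam k i j * cinf C := by
        refine Finset.sum_le_sum fun k _ => ?_
        unfold gradLam frob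
        refine (Finset.abs_sum_le_sum_abs _ _).trans ?_
        refine Finset.sum_le_sum fun i _ => ?_
        refine (Finset.abs_sum_le_sum_abs _ _).trans ?_
        refine Finset.sum_le_sum fun j _ => ?_
        rw [abs_mul, abs_of_nonneg (piMat_nonneg hn hN η C f g lam k i j)]
        exact mul_le_mul_of_nonneg_left (abs_le_cinf C k i j)
          (piMat_nonneg hn hN η C f g lam k i j)
    _ = cinf C := by
        simp only [← Finset.sum_mul]
        rw [pi_total hn hN, one_mul]

lemma zeta_ratio_le {η : ℝ} (hη : 0 < η) (C : Fin N → Mat n) (f g : Fin n → ℝ)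
    (lam mu : Fin N → ℝ) {δ : ℝ}
    (hδ : ∀ k i j, |(mu k - lam k) * C k i j| ≤ δ) (k : Fin N) (i j : Fin n) :
    zeta η C f g lam k i j ≤ Real.exp (δ / η) * zeta η C f g mu k i j := by
  unfold zeta
  rw [← Real.exp_add]
  apply Real.exp_le_exp.mpr
  have h := hδ k i j
  have h1 : (mu k - lam k) * C k i j ≤ δ := (abs_le.mp h).2
  have h2 : -δ ≤ (mu k - lam k) * C k i j := (abs_le.mp h).1
  rw [← add_div, div_le_div_iff_of_pos_right hη]
  nlinarith

lemma pi_ratio (hn : 0 < n) (hN : 0 < N) {η : ℝ} (hη : 0 < η) (C : Fin N → Mat n)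
    (f g : Fin n → ℝ) (lam mu : Fin N → ℝ) {δ : ℝ}
    (hδ : ∀ k i j, |(mu k - lam k) * C k i j| ≤ δ) (k : Fin N) (i j : Fin n) :
    Real.exp (-(2 * δ) / η) * piMat η C f g mu k i j ≤ piMat η C f g lam k i j := by
  have hδ' : ∀ k i j, |(lam k - mu k) * C k i j| ≤ δ := by
    intro k i j
    have := hδ k i j
    rwa [abs_mul, abs_sub_comm, ← abs_mul] at this
  have hz1 : Real.exp (-(δ / η)) * zeta η C f g mu k i j ≤ zeta η C f g lam k i j := by
    have := zeta_ratio_le hη C f g mu lam hδ' k i j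
    rw [Real.exp_neg]
    rw [inv_mul_le_iff₀ (Real.exp_pos _)]
    linarith
  have hZ : (∑ k', mnorm1 (zeta η C f g lam k'))
      ≤ Real.exp (δ / η) * ∑ k', mnorm1 (zeta η C f g mu k') := by
    rw [Finset.mul_sum]
    refine Finset.sum_le_sum fun k' _ => ?_
    rw [mnorm1_zeta, mnorm1_zeta, Finset.mul_sum]
    refine Finset.sum_le_sum fun i _ => ?_
    rw [Finset.mul_sum]
    exact Finset.sum_le_sum fun j _ => zeta_ratio_le hη C f g lam mu hδ k' i j
  have hZm := Zsum_pos hn hN η C f g mu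
  have hZl := Zsum_pos hn hN η C f g lam
  unfold piMat
  have heq : Real.exp (-(2 * δ) / η) * (zeta η C f g mu k i j / ∑ k', mnorm1 (zeta η C f g mu k'))
      = (Real.exp (-(δ / η)) * zeta η C f g mu k i j)
        / (Real.exp (δ / η) * ∑ k', mnorm1 (zeta η C f g mu k')) := by
    have hexp : Real.exp (-(2 * δ) / η)
        = Real.exp (-(δ / η)) * (Real.exp (δ / η))⁻¹ := by
      rw [← Real.exp_neg, ← Real.exp_add]
      congr 1
      ring
    rw [hexp]
    field_simp
  rw [heq]
  exact div_le_div₀ (zeta_pos η C f g lam k i j).le hz1 hZl hZ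

lemma one_sub_exp_neg_le {x : ℝ} : 1 - Real.exp (-x) ≤ x := by
  have := Real.add_one_le_exp (-x)
  linarith

lemma grad_lip (hn : 0 < n) (hN : 0 < N) {η : ℝ} (hη : 0 < η) (C : Fin N → Mat n)
    (f g : Fin n → ℝ) (lam mu : Fin N → ℝ) {δ : ℝ} (hδ0 : 0 ≤ δ)
    (hδ : ∀ k i j, |(mu k - lam k) * C k i j| ≤ δ) :
    (∑ k, |gradLam η C f g lam k - gradLam η C f g mu k|) ≤ 4 * cinf C * δ / η := by
  have hc0 : 0 ≤ cinf C := (abs_nonneg _).trans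
    (abs_le_cinf C ⟨0, hN⟩ ⟨0, hn⟩ ⟨0, hn⟩)
  set A := 1 - Real.exp (-(2 * δ) / η) with hAdef
  have hA0 : 0 ≤ A := by
    have h1 : Real.exp (-(2 * δ) / η) ≤ 1 :=
      Real.exp_le_one_iff.mpr (by rw [neg_div]; exact neg_nonpos.mpr (by positivity))
    rw [hAdef]
    linarith
  have hδ' : ∀ k i j, |(lam k - mu k) * C k i j| ≤ δ := by
    intro k i j
    have := hδ k i j
    rwa [abs_mul, abs_sub_comm, ← abs_mul] at this
  have hptw : ∀ k i j, |piMat η C f g lam k i j - piMat η C f g mu k i j|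
      ≤ A * (piMat η C f g lam k i j + piMat η C f g mu k i j) := by
    intro k i j
    have h1 := pi_ratio hn hN hη C f g lam mu hδ k i j
    have h2 := pi_ratio hn hN hη C f g mu lam hδ' k i j
    have hpl := piMat_nonneg hn hN η C f g lam k i j
    have hpm := piMat_nonneg hn hN η C f g mu k i j
    set pl := piMat η C f g lam k i j
    set pm := piMat η C f g mu k i j
    have e1 : pm - pl ≤ A * (pl + pm) := by
      have h3 : A * pm ≤ A * (pl + pm) := mul_le_mul_of_nonneg_left (by linarith) hA0
      have h4 : pm - pl ≤ A * pm := by rw [hAdef]; nlinarith [h1]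
      linarith
    have e2 : pl - pm ≤ A * (pl + pm) := by
      have h3 : A * pl ≤ A * (pl + pm) := mul_le_mul_of_nonneg_left (by linarith) hA0
      have h4 : pl - pm ≤ A * pl := by rw [hAdef]; nlinarith [h2]
      linarith
    rw [abs_le]
    constructor <;> linarith
  have hsum : (∑ k, ∑ i, ∑ j, |piMat η C f g lam k i j - piMat η C f g mu k i j|) ≤ 2 * A := by
    calc (∑ k, ∑ i, ∑ j, |piMat η C f g lam k i j - piMat η C f g mu k i j|)
        ≤ ∑ k, ∑ i, ∑ j, A * (piMat η C f g lam k i j + piMat η C f g mu k i j) :=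
          Finset.sum_le_sum fun k _ => Finset.sum_le_sum fun i _ =>
            Finset.sum_le_sum fun j _ => hptw k i j
      _ = 2 * A := by
          simp only [← Finset.mul_sum, Finset.sum_add_distrib]
          rw [pi_total hn hN, pi_total hn hN]
          ring
  have hstep : (∑ k, |gradLam η C f g lam k - gradLam η C f g mu k|)
      ≤ cinf C * (2 * A) := by
    calc (∑ k, |gradLam η C f g lam k - gradLam η C f g mu k|)
        ≤ ∑ k, ∑ i, ∑ j, |piMat η C f g lam k i j - piMat η C f g mu k i j| * cinf C := by
          refine Finset.sum_le_sum fun k _ => ?_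
          unfold gradLam frob
          rw [← Finset.sum_sub_distrib]
          refine (Finset.abs_sum_le_sum_abs _ _).trans ?_
          refine Finset.sum_le_sum fun i _ => ?_
          rw [← Finset.sum_sub_distrib]
          refine (Finset.abs_sum_le_sum_abs _ _).trans ?_
          refine Finset.sum_le_sum fun j _ => ?_
          rw [← sub_mul, abs_mul]
          exact mul_le_mul_of_nonneg_left (abs_le_cinf C k i j) (abs_nonneg _)
      _ = (∑ k, ∑ i, ∑ j, |piMat η C f g lam k i j - piMat η C f g mu k i j|) * cinf C := by
          simp only [← Finset.sum_mul]
      _ ≤ 2 * A * cinf C := mul_le_mul_of_nonneg_right hsum hc0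
      _ = cinf C * (2 * A) := by ring
  have hAle : A ≤ 2 * δ / η := by
    rw [hAdef]
    have := one_sub_exp_neg_le (x := 2 * δ / η)
    rw [← neg_div] at this
    linarith
  calc (∑ k, |gradLam η C f g lam k - gradLam η C f g mu k|)
      ≤ cinf C * (2 * A) := hstep
    _ ≤ cinf C * (2 * (2 * δ / η)) := by
        apply mul_le_mul_of_nonneg_left _ hc0
        linarith
    _ = 4 * cinf C * δ / η := by ring

lemma grad_gstep (hn : 0 < n) (hN : 0 < N) {η : ℝ} (hη : 0 < η)
    (C : Fin N → Mat n) (b : Fin n → ℝ) (hb' : ∀ j, 0 < b j)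
    (hbsum : (∑ j, b j) = 1)
    (f go gn : Fin n → ℝ) (lam : Fin N → ℝ)
    (hgn : ∀ j, gn j = go j + η * Real.log (b j / colSum (∑ k, zeta η C f go lam k) j))
    (ct : Fin n → ℝ) (hct : ct = colSum (∑ k, piMat η C f go lam k)) :
    (∑ k, |gradLam η C f go lam k - gradLam η C f gn lam k|)
      ≤ cinf C * ∑ j, |ct j - b j| := by
  have hc0 : 0 ≤ cinf C := (abs_nonneg _).trans
    (abs_le_cinf C ⟨0, hN⟩ ⟨0, hn⟩ ⟨0, hn⟩)
  have hne : Nonempty (Fin n) := Fin.pos_iff_nonempty.mp hn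
  have hNe : Nonempty (Fin N) := Fin.pos_iff_nonempty.mp hN
  set cS : Fin n → ℝ := colSum (∑ k, zeta η C f go lam k) with hcS
  have hcS_eq : ∀ j, cS j = ∑ i, ∑ k, zeta η C f go lam k i j := by
    intro j
    rw [hcS]
    unfold colSum
    exact Finset.sum_congr rfl fun i _ => by simp [Finset.sum_apply]
  have hcSpos : ∀ j, 0 < cS j := by
    intro j
    rw [hcS_eq]
    refine Finset.sum_pos (fun i _ => ?_) Finset.univ_nonempty
    exact Finset.sum_pos (fun k _ => zeta_pos _ _ _ _ _ _ _ _) Finset.univ_nonempty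
  have hZo := Zsum_pos hn hN η C f go lam
  set Zo := ∑ k, mnorm1 (zeta η C f go lam k) with hZodef
  have hct_eq : ∀ j, ct j = cS j / Zo := by
    intro j
    rw [hct]
    unfold colSum piMat
    rw [hcS_eq, Finset.sum_div]
    refine Finset.sum_congr rfl fun i _ => ?_
    rw [Finset.sum_div]
    simp [Finset.sum_apply, hZodef]
  have hctpos : ∀ j, 0 < ct j := fun j => by
    rw [hct_eq]; exact div_pos (hcSpos j) hZo
  have hzn : ∀ k i j, zeta η C f gn lam k i j
      = zeta η C f go lam k i j * (b j / cS j) := by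
    intro k i j
    unfold zeta
    have harg : (f i + gn j - lam k * C k i j) / η
        = (f i + go j - lam k * C k i j) / η + Real.log (b j / cS j) := by
      rw [hgn j]
      field_simp
      ring
    rw [harg, Real.exp_add, Real.exp_log (div_pos (hb' j) (hcSpos j))]
  have hZn : (∑ k, mnorm1 (zeta η C f gn lam k)) = ∑ j, b j := by
    calc (∑ k, mnorm1 (zeta η C f gn lam k))
        = ∑ k, ∑ i, ∑ j, zeta η C f go lam k i j * (b j / cS j) := by
          refine Finset.sum_congr rfl fun k _ => ?_
          rw [mnorm1_zeta]
          exact Finset.sum_congr rfl fun i _ => Finset.sum_congr rfl fun j _ => hzn k i j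
      _ = ∑ i, ∑ k, ∑ j, zeta η C f go lam k i j * (b j / cS j) := Finset.sum_comm
      _ = ∑ i, ∑ j, ∑ k, zeta η C f go lam k i j * (b j / cS j) :=
          Finset.sum_congr rfl fun i _ => Finset.sum_comm
      _ = ∑ j, ∑ i, ∑ k, zeta η C f go lam k i j * (b j / cS j) := Finset.sum_comm
      _ = ∑ j, (∑ i, ∑ k, zeta η C f go lam k i j) * (b j / cS j) := by
          refine Finset.sum_congr rfl fun j _ => ?_
          simp only [← Finset.sum_mul]
      _ = ∑ j, b j := by
          refine Finset.sum_congr rfl fun j _ => ?_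
          rw [← hcS_eq j, div_eq_mul_inv, ← mul_assoc, mul_comm (cS j) (b j), mul_assoc,
            mul_inv_cancel₀ (hcSpos j).ne', mul_one]
  have hpn : ∀ k i j, piMat η C f gn lam k i j
      = piMat η C f go lam k i j * (b j / ct j) := by
    intro k i j
    unfold piMat
    rw [hZn, hbsum, hzn k i j, hct_eq j, div_one, ← hZodef]
    have h1 := (hcSpos j).ne'
    have h2 := hZo.ne'
    field_simp
  have hky : ∀ j, (∑ k, ∑ i, piMat η C f go lam k i j) = ct j := by
    intro j
    rw [hct]
    unfold colSum
    rw [Finset.sum_comm]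
    exact Finset.sum_congr rfl fun i _ => by simp [Finset.sum_apply]
  calc (∑ k, |gradLam η C f go lam k - gradLam η C f gn lam k|)
      ≤ ∑ k, ∑ i, ∑ j, piMat η C f go lam k i j * (|1 - b j / ct j| * cinf C) := by
        refine Finset.sum_le_sum fun k _ => ?_
        have hdiff : gradLam η C f go lam k - gradLam η C f gn lam k
            = ∑ i, ∑ j, piMat η C f go lam k i j * ((1 - b j / ct j) * C k i j) := by
          unfold gradLam frob
          rw [← Finset.sum_sub_distrib]
          refine Finset.sum_congr rfl fun i _ => ?_
          rw [← Finset.sum_sub_distrib]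
          refine Finset.sum_congr rfl fun j _ => ?_
          rw [hpn k i j]
          ring
        rw [hdiff]
        refine (Finset.abs_sum_le_sum_abs _ _).trans ?_
        refine Finset.sum_le_sum fun i _ => ?_
        refine (Finset.abs_sum_le_sum_abs _ _).trans ?_
        refine Finset.sum_le_sum fun j _ => ?_
        rw [abs_mul, abs_mul, abs_of_nonneg (piMat_nonneg hn hN η C f go lam k i j)]
        refine mul_le_mul_of_nonneg_left ?_ (piMat_nonneg hn hN η C f go lam k i j)
        exact mul_le_mul_of_nonneg_left (abs_le_cinf C k i j) (abs_nonneg _)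
    _ = ∑ i, ∑ k, ∑ j, piMat η C f go lam k i j * (|1 - b j / ct j| * cinf C) :=
        Finset.sum_comm
    _ = ∑ i, ∑ j, ∑ k, piMat η C f go lam k i j * (|1 - b j / ct j| * cinf C) :=
        Finset.sum_congr rfl fun i _ => Finset.sum_comm
    _ = ∑ j, ∑ i, ∑ k, piMat η C f go lam k i j * (|1 - b j / ct j| * cinf C) :=
        Finset.sum_comm
    _ = ∑ j, (∑ k, ∑ i, piMat η C f go lam k i j) * (|1 - b j / ct j| * cinf C) := by
        refine Finset.sum_congr rfl fun j _ => ?_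
        simp only [← Finset.sum_mul]
        rw [Finset.sum_comm]
    _ = ∑ j, ct j * (|1 - b j / ct j| * cinf C) := by
        refine Finset.sum_congr rfl fun j _ => ?_
        rw [hky j]
    _ = cinf C * ∑ j, |ct j - b j| := by
        rw [Finset.mul_sum]
        refine Finset.sum_congr rfl fun j _ => ?_
        have h1 : |1 - b j / ct j| = |ct j - b j| / ct j := by
          have h2 : (ct j - b j) / ct j = 1 - b j / ct j := by
            rw [sub_div, div_self (hctpos j).ne']
          rw [← h2, abs_div, abs_of_pos (hctpos j)]
        rw [h1, ← mul_assoc, mul_comm (ct j) (|ct j - b j| / ct j),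
          div_mul_cancel₀ _ (hctpos j).ne', mul_comm]

end AuxPAME

set_option maxHeartbeats 1000000 in
/-- bound on ⟨λ − λ^t, ∇_λ F(f^{t+1}, g^t, λ^t)⟩ along PAME. -/
theorem pame_lambda_inner_bound
    {n N : ℕ} (hn : 0 < n) (hN : 0 < N)
    (C : Fin N → Mat n) (a b : Fin n → ℝ)
    (ha : a ∈ stdSimplex ℝ (Fin n)) (hb : b ∈ stdSimplex ℝ (Fin n))
    (ha' : ∀ i, 0 < a i) (hb' : ∀ j, 0 < b j)
    (η : ℝ) (hη : 0 < η) (hc : 0 < cinf C) (hηc : η ≤ cinf C)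
    (θ : ℝ) (hθ0 : 0 < θ) (hθ1 : θ < 1)
    (τ : ℝ) (hτ : τ = η / (2 * cinf C ^ 2))
    (f g : ℕ → Fin n → ℝ) (lam y : ℕ → Fin N → ℝ)
    (hf0 : f 0 = fun _ => 1) (hg0 : g 0 = fun _ => 1)
    (hlam0 : lam 0 = fun _ => (N : ℝ)⁻¹)
    (hfstep : ∀ t, f (t + 1) = fun i =>
      f t i + η * Real.log (a i / rowSum (∑ k, zeta η C (f t) (g t) (lam t) k) i))
    (hgstep : ∀ t, g (t + 1) = fun j =>
      g t j + η * Real.log (b j / colSum (∑ k, zeta η C (f (t + 1)) (g t) (lam t) k) j))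
    (hystep : ∀ t, IsProjSimplex (y (t + 1))
      (fun k => lam t k + (1 - θ) * (lam t k - lam (t - 1) k)))
    (hlamstep : ∀ t, IsProjSimplex (lam (t + 1))
      (fun k => y (t + 1) k + τ * gradLam η C (f (t + 1)) (g (t + 1)) (y (t + 1)) k))
    (ct : ℕ → Fin n → ℝ)
    (hct : ∀ t, ct t = colSum (∑ k, piMat η C (f (t + 1)) (g t) (lam t) k)) :
    ∀ t : ℕ, ∀ lamv ∈ stdSimplex ℝ (Fin N),
      (∑ k, (lamv k - lam t k) * gradLam η C (f (t + 1)) (g t) (lam t) k)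
        ≤ cinf C * vnorm1 (fun j => ct t j - b j)
          + 7 * cinf C ^ 2 * vnorm2 (fun k => lam (t + 1) k - y (t + 1) k) / η
          + 5 * (1 - θ) * cinf C ^ 2 * vnorm2 (fun k => lam t k - lam (t - 1) k) / η := by
  intro t lamv hlamv
  have hlam_mem : ∀ s : ℕ, lam s ∈ stdSimplex ℝ (Fin N) := by
    intro s
    cases s with
    | zero =>
      rw [hlam0]
      refine ⟨fun i => by positivity, ?_⟩
      rw [Finset.sum_const, Finset.card_univ, Fintype.card_fin, nsmul_eq_mul]
      exact mul_inv_cancel₀ (Nat.cast_ne_zero.mpr hN.ne')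
    | succ s => exact (hlamstep s).1
  have hy_mem : y (t + 1) ∈ stdSimplex ℝ (Fin N) := (hystep t).1
  have hc0 : (0:ℝ) ≤ cinf C := hc.le
  set d := vnorm2 (fun k => lam t k - lam (t - 1) k) with hd
  set e := vnorm2 (fun k => lam (t + 1) k - y (t + 1) k) with he
  have hdnn : 0 ≤ d := vnorm2_nonneg _
  have henn : 0 ≤ e := vnorm2_nonneg _
  -- y-step contraction
  have hyd : vnorm2 (fun k => y (t + 1) k - lam t k) ≤ (1 - θ) * d := by
    have h1 := proj_contract (hystep t) (hlam_mem t)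
    refine h1.trans ?_
    have h2 : (fun k => (lam t k + (1 - θ) * (lam t k - lam (t - 1) k)) - lam t k)
        = fun k => (1 - θ) * (lam t k - lam (t - 1) k) := by
      funext k; ring
    rw [h2, vnorm2_smul (by linarith : (0:ℝ) ≤ 1 - θ)]
  -- term A : g-step
  have habs1 : ∀ k, |lamv k - lam t k| ≤ 1 :=
    fun k => simplex_abs_sub_le_one hlamv (hlam_mem t) k
  have hA : (∑ k, (lamv k - lam t k) *
        (gradLam η C (f (t + 1)) (g t) (lam t) k
          - gradLam η C (f (t + 1)) (g (t + 1)) (lam t) k))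
      ≤ cinf C * vnorm1 (fun j => ct t j - b j) := by
    have h1 := dot_le_bound (fun k => lamv k - lam t k)
      (fun k => gradLam η C (f (t + 1)) (g t) (lam t) k
        - gradLam η C (f (t + 1)) (g (t + 1)) (lam t) k) 1 habs1
    rw [one_mul] at h1
    refine h1.trans ?_
    have h2 := grad_gstep hn hN hη C b hb' hb.2 (f (t + 1)) (g t) (g (t + 1)) (lam t)
      (fun j => by rw [hgstep t]) (ct t) (hct t)
    simpa [vnorm1] using h2
  -- term B : lam t vs y (t+1)
  have hB : (∑ k, (lamv k - lam t k) *
        (gradLam η C (f (t + 1)) (g (t + 1)) (lam t) k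
          - gradLam η C (f (t + 1)) (g (t + 1)) (y (t + 1)) k))
      ≤ 4 * (1 - θ) * cinf C ^ 2 * d / η := by
    have hvnn : 0 ≤ vnorm2 (fun k => y (t + 1) k - lam t k) := vnorm2_nonneg _
    have hδ : ∀ k i j, |(y (t + 1) k - lam t k) * C k i j|
        ≤ cinf C * vnorm2 (fun k => y (t + 1) k - lam t k) := by
      intro k i j
      rw [abs_mul]
      calc |y (t + 1) k - lam t k| * |C k i j|
          ≤ vnorm2 (fun k => y (t + 1) k - lam t k) * cinf C :=
            mul_le_mul (abs_le_vnorm2 (fun k => y (t + 1) k - lam t k) k)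
              (abs_le_cinf C k i j) (abs_nonneg _) hvnn
        _ = cinf C * vnorm2 (fun k => y (t + 1) k - lam t k) := mul_comm _ _
    have h2 := grad_lip hn hN hη C (f (t + 1)) (g (t + 1)) (lam t) (y (t + 1))
      (by positivity) hδ
    have h1 := dot_le_bound (fun k => lamv k - lam t k)
      (fun k => gradLam η C (f (t + 1)) (g (t + 1)) (lam t) k
        - gradLam η C (f (t + 1)) (g (t + 1)) (y (t + 1)) k) 1 habs1
    rw [one_mul] at h1
    refine (h1.trans h2).trans ?_
    have h3 : 4 * cinf C * (cinf C * vnorm2 (fun k => y (t + 1) k - lam t k)) / η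
        ≤ 4 * cinf C * (cinf C * ((1 - θ) * d)) / η := by
      gcongr
    refine h3.trans ?_
    apply le_of_eq
    ring
  -- term D : projection variational inequality for lam (t+1)
  have hD : (∑ k, (lamv k - lam (t + 1) k) *
        gradLam η C (f (t + 1)) (g (t + 1)) (y (t + 1)) k)
      ≤ 4 * cinf C ^ 2 * e / η := by
    have hvi := proj_vi (hlamstep t) hlamv
    have hsplit2 : (∑ k, (lamv k - lam (t + 1) k) *
          ((y (t + 1) k + τ * gradLam η C (f (t + 1)) (g (t + 1)) (y (t + 1)) k)
            - lam (t + 1) k))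
        = (∑ k, (lamv k - lam (t + 1) k) * (y (t + 1) k - lam (t + 1) k))
          + τ * ∑ k, (lamv k - lam (t + 1) k) *
              gradLam η C (f (t + 1)) (g (t + 1)) (y (t + 1)) k := by
      rw [Finset.mul_sum, ← Finset.sum_add_distrib]
      exact Finset.sum_congr rfl fun k _ => by ring
    have hneg : (∑ k, (lamv k - lam (t + 1) k) * (y (t + 1) k - lam (t + 1) k))
        = - ∑ k, (lamv k - lam (t + 1) k) * (lam (t + 1) k - y (t + 1) k) := by
      rw [← Finset.sum_neg_distrib]
      exact Finset.sum_congr rfl fun k _ => by ring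
    have hCS : (∑ k, (lamv k - lam (t + 1) k) * (lam (t + 1) k - y (t + 1) k))
        ≤ 2 * e := by
      refine (dot_le_cs _ _).trans ?_
      rw [he]
      exact mul_le_mul_of_nonneg_right
        (simplex_vnorm2_sub_le_two hlamv (hlam_mem (t + 1))) henn
    have hτpos : 0 < τ := by
      rw [hτ]; positivity
    have hkey : τ * (∑ k, (lamv k - lam (t + 1) k) *
          gradLam η C (f (t + 1)) (g (t + 1)) (y (t + 1)) k) ≤ 2 * e := by
      rw [hsplit2, hneg] at hvi
      linarith
    have h5 : (∑ k, (lamv k - lam (t + 1) k) *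
          gradLam η C (f (t + 1)) (g (t + 1)) (y (t + 1)) k) ≤ 2 * e / τ := by
      rw [le_div_iff₀ hτpos]
      linarith [hkey]
    refine h5.trans ?_
    rw [hτ, div_div_eq_mul_div]
    apply le_of_eq
    field_simp
    ring
  -- term E
  have habs3 : ∀ k, |lam (t + 1) k - lam t k| ≤ e + (1 - θ) * d := by
    intro k
    have h1 : |lam (t + 1) k - lam t k|
        ≤ |lam (t + 1) k - y (t + 1) k| + |y (t + 1) k - lam t k| := abs_sub_le _ _ _
    have h2 := abs_le_vnorm2 (fun k => lam (t + 1) k - y (t + 1) k) k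
    have h3 := abs_le_vnorm2 (fun k => y (t + 1) k - lam t k) k
    have h4 := hyd
    rw [← he] at h2
    linarith
  have hE : (∑ k, (lam (t + 1) k - lam t k) *
        gradLam η C (f (t + 1)) (g (t + 1)) (y (t + 1)) k)
      ≤ (e + (1 - θ) * d) * cinf C := by
    have h1 := dot_le_bound (fun k => lam (t + 1) k - lam t k)
      (fun k => gradLam η C (f (t + 1)) (g (t + 1)) (y (t + 1)) k)
      (e + (1 - θ) * d) habs3
    refine h1.trans ?_
    refine mul_le_mul_of_nonneg_left ?_ (by nlinarith)
    exact grad_abs_sum_le hn hN η C (f (t + 1)) (g (t + 1)) (y (t + 1))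
  -- decomposition
  have hsplit : (∑ k, (lamv k - lam t k) * gradLam η C (f (t + 1)) (g t) (lam t) k)
      = (∑ k, (lamv k - lam t k) *
          (gradLam η C (f (t + 1)) (g t) (lam t) k
            - gradLam η C (f (t + 1)) (g (t + 1)) (lam t) k))
        + ((∑ k, (lamv k - lam t k) *
          (gradLam η C (f (t + 1)) (g (t + 1)) (lam t) k
            - gradLam η C (f (t + 1)) (g (t + 1)) (y (t + 1)) k))
        + ((∑ k, (lamv k - lam (t + 1) k) *
            gradLam η C (f (t + 1)) (g (t + 1)) (y (t + 1)) k)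
          + (∑ k, (lam (t + 1) k - lam t k) *
            gradLam η C (f (t + 1)) (g (t + 1)) (y (t + 1)) k))) := by
    rw [← Finset.sum_add_distrib, ← Finset.sum_add_distrib, ← Finset.sum_add_distrib]
    exact Finset.sum_congr rfl fun k _ => by ring
  -- c∞ ≤ c∞²/η products
  have hcle : cinf C * η ≤ cinf C ^ 2 := by nlinarith
  have hkey1 : (e + (1 - θ) * d) * cinf C
      ≤ cinf C ^ 2 * e / η + (1 - θ) * cinf C ^ 2 * d / η := by
    have h1 : e * (cinf C * η) ≤ e * cinf C ^ 2 := by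
      apply mul_le_mul_of_nonneg_left hcle henn
    have h2 : ((1 - θ) * d) * (cinf C * η) ≤ ((1 - θ) * d) * cinf C ^ 2 := by
      apply mul_le_mul_of_nonneg_left hcle
      nlinarith
    have hsum : cinf C ^ 2 * e / η + (1 - θ) * cinf C ^ 2 * d / η
        = (cinf C ^ 2 * e + (1 - θ) * cinf C ^ 2 * d) / η := by ring
    rw [hsum, le_div_iff₀ hη]
    nlinarith [h1, h2]
  have hEtot : (∑ k, (lam (t + 1) k - lam t k) *
        gradLam η C (f (t + 1)) (g (t + 1)) (y (t + 1)) k)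
      ≤ cinf C ^ 2 * e / η + (1 - θ) * cinf C ^ 2 * d / η := hE.trans hkey1
  have h7 : 0 ≤ cinf C ^ 2 * e / η := by positivity
  rw [hsplit]
  set W := (1 - θ) * cinf C ^ 2 * d / η with hW
  set Y := cinf C ^ 2 * e / η with hY
  have e1 : 4 * (1 - θ) * cinf C ^ 2 * d / η = 4 * W := by rw [hW]; ring
  have e2 : 4 * cinf C ^ 2 * e / η = 4 * Y := by rw [hY]; ring
  have e3 : 7 * cinf C ^ 2 * e / η = 7 * Y := by rw [hY]; ring
  have e4 : 5 * (1 - θ) * cinf C ^ 2 * d / η = 5 * W := by rw [hW]; ring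
  rw [e1] at hB
  rw [e2] at hD
  rw [e3, e4]
  linarith [hA, hB, hD, hEtot, h7]


end EOT

end
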